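/- Let a ∈ ℝ⁴ with a ≠ 0, let {ε₁, ε₂, ε₃} be an orthonormal basis of a^⊥ with ε₁ = (−d,c,−b,a)/|a|, ε₂ = (−c,−d,a,b)/|a|, ε₃ = (−b,a,d,−c)/|a| where a = (a,b,c,d), and for R ∈ (0,1) define γ(s) = R(cos(s/R) ε₁ + sin(s/R) ε₂) + √(1−R²) ε₃. Then γ is a unit-speed curve on S³ satisfying γ'' + γ = q · (V(γ) ×_{S³} γ') with q = −√(1−R²)/(|a|R), where V(p) = a − ⟨a,p⟩p. -/

import Mathlib

def dot4 (u v : Fin 4 → ℝ) : ℝ := ∑ i, u i * v i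

def det4 (u v w p : Fin 4 → ℝ) : ℝ := (Matrix.of ![u, v, w, p]).det

lemma dot4_add_left (u v w : Fin 4 → ℝ) : dot4 (u + v) w = dot4 u w + dot4 v w := by
  simp [dot4, add_mul, Finset.sum_add_distrib]

lemma dot4_sub_left (u v w : Fin 4 → ℝ) : dot4 (u - v) w = dot4 u w - dot4 v w := by
  simp [dot4, sub_mul, Finset.sum_sub_distrib]

lemma dot4_smul_left (c : ℝ) (u w : Fin 4 → ℝ) : dot4 (c • u) w = c * dot4 u w := by
  simp [dot4, Finset.mul_sum, mul_assoc]

lemma dot4_self_eq_zero {w : Fin 4 → ℝ} (h : dot4 w w = 0) : w = 0 := by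
  have h' : ∀ i ∈ Finset.univ, w i * w i = 0 := by
    rw [dot4, Finset.sum_eq_zero_iff_of_nonneg (fun i _ => mul_self_nonneg (w i))] at h
    exact h
  funext i
  have := h' i (Finset.mem_univ i)
  have := mul_self_eq_zero.mp this
  simpa using this

lemma det4_eq (u v w p : Fin 4 → ℝ) :
    det4 u v w p =
      u 0*v 1*w 2*p 3 - u 0*v 1*w 3*p 2 - u 0*v 2*w 1*p 3 + u 0*v 2*w 3*p 1 + u 0*v 3*w 1*p 2
      - u 0*v 3*w 2*p 1 - u 1*v 0*w 2*p 3 + u 1*v 0*w 3*p 2 + u 1*v 2*w 0*p 3 - u 1*v 2*w 3*p 0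
      - u 1*v 3*w 0*p 2 + u 1*v 3*w 2*p 0 + u 2*v 0*w 1*p 3 - u 2*v 0*w 3*p 1 - u 2*v 1*w 0*p 3
      + u 2*v 1*w 3*p 0 + u 2*v 3*w 0*p 1 - u 2*v 3*w 1*p 0 - u 3*v 0*w 1*p 2 + u 3*v 0*w 2*p 1
      + u 3*v 1*w 0*p 2 - u 3*v 1*w 2*p 0 - u 3*v 2*w 0*p 1 + u 3*v 2*w 1*p 0 := by
  show (Matrix.of ![u, v, w, p]).det = _
  rw [show (Matrix.of ![u, v, w, p]) = Matrix.of ![![u 0, u 1, u 2, u 3], ![v 0, v 1, v 2, v 3],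
      ![w 0, w 1, w 2, w 3], ![p 0, p 1, p 2, p 3]] by
    ext i j
    fin_cases i <;> fin_cases j <;> rfl]
  norm_num [Matrix.det_succ_row_zero, Fin.sum_univ_succ]
  norm_num [show (Fin.succAbove 1 (2:Fin 3) : Fin 4) = 3 from rfl,
    show (Fin.succAbove 2 (2:Fin 3) : Fin 4) = 3 from rfl,
    show (Fin.castSucc (2:Fin 3) : Fin 4) = 2 from rfl]
  simp
  ring

set_option maxHeartbeats 2000000 in
/-- The small circle `γ(s) = R(cos(s/R) ε₁ + sin(s/R) ε₂) + √(1-R²) ε₃` in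
`a^⊥ ∩ S³` is a unit-speed conformal trajectory of `V(p) = a - ⟨a,p⟩p` with
`q = -√(1-R²)/(|a| R)`. -/
theorem stmt11 (A B C D R q na : ℝ) (a ε₁ ε₂ ε₃ : Fin 4 → ℝ)
    (ha : a = ![A, B, C, D]) (hane : a ≠ 0)
    (hna : na = Real.sqrt (A ^ 2 + B ^ 2 + C ^ 2 + D ^ 2))
    (hε₁ : ε₁ = na⁻¹ • ![-D, C, -B, A])
    (hε₂ : ε₂ = na⁻¹ • ![-C, -D, A, B])
    (hε₃ : ε₃ = na⁻¹ • ![-B, A, D, -C])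
    (hR1 : 0 < R) (hR2 : R < 1)
    (γ g g' X : ℝ → (Fin 4 → ℝ))
    (hγ : γ = fun s => R • (Real.cos (s / R) • ε₁ + Real.sin (s / R) • ε₂)
      + Real.sqrt (1 - R ^ 2) • ε₃)
    (hd1 : ∀ s, HasDerivAt γ (g s) s)
    (hd2 : ∀ s, HasDerivAt g (g' s) s)
    (hXt : ∀ s, dot4 (X s) (γ s) = 0)
    (hX : ∀ s, ∀ w, dot4 w (γ s) = 0 →
      dot4 (X s) w = det4 (a - dot4 a (γ s) • γ s) (g s) w (γ s))
    (hq : q = -Real.sqrt (1 - R ^ 2) / (na * R)) :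
    (∀ s, dot4 (γ s) (γ s) = 1) ∧ (∀ s, dot4 (g s) (g s) = 1) ∧
    (∀ s, g' s + γ s = q • X s) := by
  have hR0 : R ≠ 0 := ne_of_gt hR1
  -- norm facts
  have hsumpos : 0 < A ^ 2 + B ^ 2 + C ^ 2 + D ^ 2 := by
    rcases lt_or_ge 0 (A ^ 2 + B ^ 2 + C ^ 2 + D ^ 2) with h | h
    · exact h
    · exfalso
      apply hane
      have hA : A = 0 := by nlinarith [sq_nonneg A, sq_nonneg B, sq_nonneg C, sq_nonneg D]
      have hB : B = 0 := by nlinarith [sq_nonneg A, sq_nonneg B, sq_nonneg C, sq_nonneg D]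
      have hC : C = 0 := by nlinarith [sq_nonneg A, sq_nonneg B, sq_nonneg C, sq_nonneg D]
      have hD : D = 0 := by nlinarith [sq_nonneg A, sq_nonneg B, sq_nonneg C, sq_nonneg D]
      funext i
      rw [ha]
      fin_cases i <;> simp [hA, hB, hC, hD]
  have hnapos : 0 < na := by rw [hna]; exact Real.sqrt_pos.mpr hsumpos
  have hna0 : na ≠ 0 := ne_of_gt hnapos
  have hna2 : na ^ 2 = A ^ 2 + B ^ 2 + C ^ 2 + D ^ 2 := by
    rw [hna]; exact Real.sq_sqrt hsumpos.le
  have hr3 : Real.sqrt (1 - R ^ 2) ^ 2 = 1 - R ^ 2 := by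
    apply Real.sq_sqrt; nlinarith
  set r3 := Real.sqrt (1 - R ^ 2) with hr3def
  -- derivatives
  set G : ℝ → Fin 4 → ℝ := fun s =>
    R • ((-Real.sin (s / R) * R⁻¹) • ε₁ + (Real.cos (s / R) * R⁻¹) • ε₂) with hGdef
  set G' : ℝ → Fin 4 → ℝ := fun s =>
    R • ((-Real.cos (s / R) * R⁻¹ * R⁻¹) • ε₁ + (-Real.sin (s / R) * R⁻¹ * R⁻¹) • ε₂) with hG'def
  have hdiv : ∀ s : ℝ, HasDerivAt (fun t : ℝ => t / R) R⁻¹ s := by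
    intro s
    simpa using (hasDerivAt_id s).div_const R
  have hdG : ∀ s, HasDerivAt γ (G s) s := by
    intro s
    rw [hγ]
    exact ((((hdiv s).cos.smul_const ε₁).add ((hdiv s).sin.smul_const ε₂)).const_smul R).add_const _
  have hgG : g = G := funext fun s => (hd1 s).unique (hdG s)
  have hdG' : ∀ s, HasDerivAt G (G' s) s := by
    intro s
    have h₁ : HasDerivAt (fun t : ℝ => -Real.sin (t / R) * R⁻¹)
        (-Real.cos (s / R) * R⁻¹ * R⁻¹) s := by
      have := ((hdiv s).sin.neg.mul_const R⁻¹)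
      exact this.congr_deriv (by ring)
    have h₂ : HasDerivAt (fun t : ℝ => Real.cos (t / R) * R⁻¹)
        (-Real.sin (s / R) * R⁻¹ * R⁻¹) s := by
      exact (hdiv s).cos.mul_const R⁻¹
    exact (((h₁.smul_const ε₁).add (h₂.smul_const ε₂)).const_smul R)
  have hg' : ∀ s, g' s = G' s := fun s => (hd2 s).unique (by rw [hgG]; exact hdG' s)
  have simp_set : True := trivial
  refine ⟨?_, ?_, ?_⟩
  · intro s
    simp only [hγ, hε₁, hε₂, hε₃, dot4, Fin.sum_univ_four, Pi.add_apply, Pi.smul_apply,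
      smul_eq_mul, Matrix.cons_val_zero, Matrix.cons_val_one, Matrix.head_cons,
      Matrix.cons_val_two, Matrix.tail_cons, Matrix.cons_val_three, Matrix.cons_val_fin_one]
    have hc : Real.cos (s / R) ^ 2 + Real.sin (s / R) ^ 2 = 1 := Real.cos_sq_add_sin_sq _
    field_simp
    linear_combination ((A^2+B^2+C^2+D^2)*R^2) * hc + (A^2+B^2+C^2+D^2) * hr3 - hna2
  · intro s
    rw [hgG]
    simp only [hGdef, hε₁, hε₂, hε₃, dot4, Fin.sum_univ_four, Pi.add_apply, Pi.smul_apply,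
      smul_eq_mul, Matrix.cons_val_zero, Matrix.cons_val_one, Matrix.head_cons,
      Matrix.cons_val_two, Matrix.tail_cons, Matrix.cons_val_three, Matrix.cons_val_fin_one]
    have hc : Real.cos (s / R) ^ 2 + Real.sin (s / R) ^ 2 = 1 := Real.cos_sq_add_sin_sq _
    field_simp
    linear_combination (A^2+B^2+C^2+D^2) * hc - hna2
  · intro s
    have haγ : dot4 a (γ s) = 0 := by
      simp only [hγ, hε₁, hε₂, hε₃, ha, dot4, Fin.sum_univ_four, Pi.add_apply, Pi.smul_apply,
        smul_eq_mul, Matrix.cons_val_zero, Matrix.cons_val_one, Matrix.head_cons,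
        Matrix.cons_val_two, Matrix.tail_cons, Matrix.cons_val_three, Matrix.cons_val_fin_one]
      ring
    have key : ∀ w : Fin 4 → ℝ,
        dot4 (g' s + γ s) w = q * det4 (a - dot4 a (γ s) • γ s) (g s) w (γ s) := by
      intro w
      rw [haγ, hg', hgG]
      have hc : Real.cos (s / R) ^ 2 + Real.sin (s / R) ^ 2 = 1 := Real.cos_sq_add_sin_sq _
      rw [hq]
      simp only [zero_smul, sub_zero, det4_eq,
        hG'def, hGdef, hγ, hε₁, hε₂, hε₃, ha, dot4, Fin.sum_univ_four, Pi.add_apply,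
        Pi.smul_apply, smul_eq_mul, Matrix.cons_val_zero, Matrix.cons_val_one,
        Matrix.head_cons, Matrix.cons_val_two, Matrix.tail_cons, Matrix.cons_val_three,
        Matrix.cons_val_fin_one]
      field_simp
      linear_combination (-1*A^2*D*R*r3*(w 2) + -1*A^3*R*r3*(w 1) + 1*A^2*C*R*r3*(w 3) + -1*A*B^2*R*r3*(w 1) + 1*B^2*C*R*r3*(w 3) + 1*A^2*B*R*r3*(w 0) + 1*B^3*R*r3*(w 0) + -1*B^2*D*R*r3*(w 2) + -1*A*C^2*R*r3*(w 1) + 1*C^3*R*r3*(w 3) + 1*C*D^2*R*r3*(w 3) + 1*B*C^2*R*r3*(w 0) + -1*C^2*D*R*r3*(w 2) + 1*B*D^2*R*r3*(w 0) + -1*D^3*R*r3*(w 2) + -1*A*D^2*R*r3*(w 1)) * hc + (1*A*C^2*Real.sin (s / R)*(w 2) + 1*A*D^2*Real.cos (s / R)*(w 3) + 1*A^2*C*Real.cos (s / R)*(w 1) + 1*A^2*B*Real.sin (s / R)*(w 3) + 1*A^3*Real.cos (s / R)*(w 3) + -1*A^2*D*Real.sin (s / R)*(w 1) + 1*A^3*Real.sin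 (s / R)*(w 2) + -1*A^2*B*Real.cos (s / R)*(w 2) + -1*B*C^2*Real.cos (s / R)*(w 2) + 1*B*D^2*Real.sin (s / R)*(w 3) + -1*B^2*C*Real.sin (s / R)*(w 0) + 1*B^3*Real.sin (s / R)*(w 3) + 1*A*B^2*Real.cos (s / R)*(w 3) + -1*B^2*D*Real.cos (s / R)*(w 0) + 1*A*B^2*Real.sin (s / R)*(w 2) + -1*B^3*Real.cos (s / R)*(w 2) + -1*C^2*D*Real.sin (s / R)*(w 1) + 1*C^3*Real.cos (s / R)*(w 1) + 1*A*C^2*Real.cos (s / R)*(w 3) + -1*C^3*Real.sin (s / R)*(w 0) + -1*C^2*D*Real.cos (s / R)*(w 0) + 1*B*C^2*Real.sin (s / R)*(w 3) + -1*A^2*C*Real.sin (s / R)*(w 0) + 1*B^2*C*Real.cos (s / R)*(w 1) + -1*D^3*Real.sin (s / R)*(w 1) + 1*C*D^2*Real.cos (s / R)*(w 1) + 1*A*D^2*Real.sin (s / R)*(w 2) + -1*C*D^2*Real.sin (s / R)*(w 0) + -1*D^3*Real.cos (s / R)*(w 0) + -1*B*D^2*Real.cos (s / R)*(w 2) + -1*A^2*D*Real.cos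 (s / R)*(w 0) + -1*B^2*D*Real.sin (s / R)*(w 1)) * hr3 + (1*D*Real.cos (s / R)*(w 0) + 1*C*Real.sin (s / R)*(w 0) + -1*D*R^2*Real.cos (s / R)*(w 0) + -1*C*R^2*Real.sin (s / R)*(w 0) + -1*B*R*r3*(w 0) + -1*C*Real.cos (s / R)*(w 1) + 1*D*Real.sin (s / R)*(w 1) + 1*C*R^2*Real.cos (s / R)*(w 1) + -1*D*R^2*Real.sin (s / R)*(w 1) + 1*A*R*r3*(w 1) + 1*B*Real.cos (s / R)*(w 2) + -1*A*Real.sin (s / R)*(w 2) + -1*B*R^2*Real.cos (s / R)*(w 2) + 1*A*R^2*Real.sin (s / R)*(w 2) + 1*D*R*r3*(w 2) + -1*A*Real.cos (s / R)*(w 3) + -1*B*Real.sin (s / R)*(w 3) + 1*A*R^2*Real.cos (s / R)*(w 3) + 1*B*R^2*Real.sin (s / R)*(w 3) + -1*C*R*r3*(w 3)) * hna2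
    have hdet0 : det4 (a - dot4 a (γ s) • γ s) (g s) (γ s) (γ s) = 0 := by
      rw [det4_eq]; ring
    have hw0γ : dot4 (g' s + γ s - q • X s) (γ s) = 0 := by
      rw [dot4_sub_left, dot4_smul_left, key (γ s), hdet0, hXt s]; ring
    have hzero : dot4 (g' s + γ s - q • X s) (g' s + γ s - q • X s) = 0 := by
      rw [dot4_sub_left, dot4_smul_left, key _, hX s _ hw0γ]; ring
    exact sub_eq_zero.mp (dot4_self_eq_zero hzero)
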